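/- arXiv:1612.05939 — 7 statements merged into one kernel-verified Lean document; each statement's English description precedes it below -/
import Mathlib

section
/- Let X, Y, Z be measurable spaces and let f : X × Y → Z be a function. Then f is measurable with respect to Σ_{X⊗Y} (and the σ-algebra of Z) if and only if both: (i) for every x ∈ X the function y ↦ f(x,y) is measurable from Y to Z, and (ii) the curried map x ↦ (y ↦ f(x,y)), regarded as a map from X to Hom(Y,Z), is measurable with respect to Σ_{Y⊸Z}. (This gives the currying bijection Meas(X⊗Y, Z) ≅ Meas(X, Y⊸Z).) -/
open MeasureTheory

/-- The canonical tensor σ-algebra `Σ_{X⊗Y}`: a set is measurable iff all of its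
vertical and horizontal sections are measurable. -/
def tensorSigma (X Y : Type*) [MeasurableSpace X] [MeasurableSpace Y] :
    MeasurableSpace (X × Y) where
  MeasurableSet' A :=
    (∀ x : X, MeasurableSet {y : Y | (x, y) ∈ A}) ∧
    (∀ y : Y, MeasurableSet {x : X | (x, y) ∈ A})
  measurableSet_empty := ⟨fun _ => by simp, fun _ => by simp⟩
  measurableSet_compl := fun A hA =>
    ⟨fun x => (hA.1 x).compl, fun y => (hA.2 y).compl⟩
  measurableSet_iUnion := fun A hA =>
    ⟨fun x => by
        have : {y : Y | (x, y) ∈ ⋃ n, A n} = ⋃ n, {y | (x, y) ∈ A n} := by ext; simp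
        rw [this]; exact MeasurableSet.iUnion fun n => (hA n).1 x,
     fun y => by
        have : {x : X | (x, y) ∈ ⋃ n, A n} = ⋃ n, {x | (x, y) ∈ A n} := by ext; simp
        rw [this]; exact MeasurableSet.iUnion fun n => (hA n).2 y⟩

/-- The internal-hom σ-algebra `Σ_{X⊸Y}` on the set of measurable functions,
generated by the sets `⟨x,U⟩ = {f | f x ∈ U}`. -/
def homSigma (X Y : Type*) [MeasurableSpace X] [MeasurableSpace Y] :
    MeasurableSpace {f : X → Y // Measurable f} :=
  MeasurableSpace.generateFrom
    {S | ∃ (x : X) (U : Set Y), MeasurableSet U ∧ S = {f | f.1 x ∈ U}}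

/-- The family `Ω_{X,Y}` of sets of the form `⟨h,V⟩` for `h : ℕ → X` injective
and `V ⊆ Y^ℕ`. -/
def Omega (X Y : Type*) [MeasurableSpace X] [MeasurableSpace Y] :
    Set (Set {f : X → Y // Measurable f}) :=
  {S | ∃ h : ℕ → X, Function.Injective h ∧
        ∃ V : Set (ℕ → Y), S = {f | (fun n => f.1 (h n)) ∈ V}}

/-- Currying: a function `f : X × Y → Z` is measurable for `Σ_{X⊗Y}` iff every
section `y ↦ f (x, y)` is measurable and the curried map
`x ↦ (y ↦ f (x, y))` is measurable into `(Hom(Y,Z), Σ_{Y⊸Z})`. -/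
theorem giry_currying {X Y Z : Type*} [MeasurableSpace X] [MeasurableSpace Y]
    [MeasurableSpace Z] (f : X × Y → Z) :
    @Measurable _ _ (tensorSigma X Y) _ f ↔
      ∃ h : ∀ x : X, Measurable fun y => f (x, y),
        @Measurable _ _ _ (homSigma Y Z)
          (fun x => (⟨fun y => f (x, y), h x⟩ : {g : Y → Z // Measurable g})) := by
  constructor
  · intro hf
    have hsec : ∀ x : X, Measurable fun y => f (x, y) := by
      intro x U hU
      exact ((hf hU).1 x)
    refine ⟨hsec, ?_⟩
    refine measurable_generateFrom ?_
    rintro S ⟨y, U, hU, rfl⟩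
    show MeasurableSet {x : X | f (x, y) ∈ U}
    exact (hf hU).2 y
  · rintro ⟨hsec, hcur⟩
    intro U hU
    refine ⟨fun x => hsec x hU, fun y => ?_⟩
    have : MeasurableSet[homSigma Y Z] {g : {g : Y → Z // Measurable g} | g.1 y ∈ U} :=
      MeasurableSpace.measurableSet_generateFrom ⟨y, U, hU, rfl⟩
    exact hcur this
end

section
/- Let (C, ⊗, I) be a monoidal category such that the unit I is a separator (i.e., for all parallel morphisms u, v : X → Y, if e ≫ u = e ≫ v for every e : I → X then u = v) and such that every morphism z : I → X ⊗ Y can be written as z = (λ_I)⁻¹ ≫ (x ⊗ y) for some x : I → X and y : I → Y. Let T be a monad on C, and let σ and τ be two families of morphisms σ_{X,Y}, τ_{X,Y} : X ⊗ T Y → T(X ⊗ Y), each natural in the first variable X (with respect to the functors (−) ⊗ T Y and T((−) ⊗ Y)), natural in the second variable Y, and each satisfying the left unit axiom σ_{I,Y} ≫ T(λ_Y) = λ_{T Y} (and likewise for τ). Then σ_{X,Y} = τ_{X,Y} for all objects X and Y; moreover each is determined by the formula σ_{X,Y} ∘ (x ⊗ ξ) ∘ (λ_I)⁻¹ = T((x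 ⊗ Y) ∘ (λ_Y)⁻¹) ∘ ξ for all x : I → X and ξ : I → T Y. -/
open CategoryTheory MonoidalCategory

/-- Uniqueness of tensorial strength: in a monoidal category whose unit is a
separator and in which every global element of a tensor product decomposes,
any two families `σ, τ : X ⊗ T Y ⟶ T (X ⊗ Y)` that are natural in each
variable and satisfy the left unit axiom coincide, and each is determined by
the formula `λ⁻¹ ≫ (x ⊗ ξ) ≫ σ = ξ ≫ T ((λ_Y)⁻¹ ≫ (x ⊗ 𝟙 Y))`. -/
theorem strength_unique {C : Type*} [Category C] [MonoidalCategory C]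
    (sep : ∀ {X Y : C} (u v : X ⟶ Y),
      (∀ e : 𝟙_ C ⟶ X, e ≫ u = e ≫ v) → u = v)
    (decomp : ∀ {X Y : C} (z : 𝟙_ C ⟶ X ⊗ Y),
      ∃ (x : 𝟙_ C ⟶ X) (y : 𝟙_ C ⟶ Y), z = (λ_ (𝟙_ C)).inv ≫ (x ⊗ₘ y))
    (T : Monad C)
    (σ τ : ∀ X Y : C, X ⊗ T.obj Y ⟶ T.obj (X ⊗ Y))
    (σnat₁ : ∀ {X X' : C} (f : X ⟶ X') (Y : C),
      (f ⊗ₘ 𝟙 (T.obj Y)) ≫ σ X' Y = σ X Y ≫ T.map (f ⊗ₘ 𝟙 Y))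
    (σnat₂ : ∀ (X : C) {Y Y' : C} (g : Y ⟶ Y'),
      (𝟙 X ⊗ₘ T.map g) ≫ σ X Y' = σ X Y ≫ T.map (𝟙 X ⊗ₘ g))
    (σunit : ∀ Y : C, σ (𝟙_ C) Y ≫ T.map (λ_ Y).hom = (λ_ (T.obj Y)).hom)
    (τnat₁ : ∀ {X X' : C} (f : X ⟶ X') (Y : C),
      (f ⊗ₘ 𝟙 (T.obj Y)) ≫ τ X' Y = τ X Y ≫ T.map (f ⊗ₘ 𝟙 Y))
    (τnat₂ : ∀ (X : C) {Y Y' : C} (g : Y ⟶ Y'),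
      (𝟙 X ⊗ₘ T.map g) ≫ τ X Y' = τ X Y ≫ T.map (𝟙 X ⊗ₘ g))
    (τunit : ∀ Y : C, τ (𝟙_ C) Y ≫ T.map (λ_ Y).hom = (λ_ (T.obj Y)).hom) :
    (∀ X Y : C, σ X Y = τ X Y) ∧
      ∀ (X Y : C) (x : 𝟙_ C ⟶ X) (ξ : 𝟙_ C ⟶ T.obj Y),
        (λ_ (𝟙_ C)).inv ≫ (x ⊗ₘ ξ) ≫ σ X Y =
          ξ ≫ T.map ((λ_ Y).inv ≫ (x ⊗ₘ 𝟙 Y)) := by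
  have key : ∀ (s : ∀ X Y : C, X ⊗ T.obj Y ⟶ T.obj (X ⊗ Y)),
      (∀ {X X' : C} (f : X ⟶ X') (Y : C),
        (f ⊗ₘ 𝟙 (T.obj Y)) ≫ s X' Y = s X Y ≫ T.map (f ⊗ₘ 𝟙 Y)) →
      (∀ Y : C, s (𝟙_ C) Y ≫ T.map (λ_ Y).hom = (λ_ (T.obj Y)).hom) →
      ∀ (X Y : C) (x : 𝟙_ C ⟶ X) (ξ : 𝟙_ C ⟶ T.obj Y),
        (λ_ (𝟙_ C)).inv ≫ (x ⊗ₘ ξ) ≫ s X Y =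
          ξ ≫ T.map ((λ_ Y).inv ≫ (x ⊗ₘ 𝟙 Y)) := by
    intro s nat₁ unit X Y x ξ
    have hs : s (𝟙_ C) Y = (λ_ (T.obj Y)).hom ≫ T.map (λ_ Y).inv := by
      rw [← unit Y, Category.assoc, ← T.map_comp, Iso.hom_inv_id, T.map_id,
        Category.comp_id]
    have hx : (x ⊗ₘ ξ) = (𝟙 (𝟙_ C) ⊗ₘ ξ) ≫ (x ⊗ₘ 𝟙 (T.obj Y)) := by
      rw [tensorHom_comp_tensorHom, Category.id_comp, Category.comp_id]
    calc (λ_ (𝟙_ C)).inv ≫ (x ⊗ₘ ξ) ≫ s X Y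
        = (λ_ (𝟙_ C)).inv ≫ (𝟙 (𝟙_ C) ⊗ₘ ξ) ≫ (x ⊗ₘ 𝟙 (T.obj Y)) ≫ s X Y := by
          rw [hx, Category.assoc]
      _ = (λ_ (𝟙_ C)).inv ≫ (𝟙 (𝟙_ C) ⊗ₘ ξ) ≫ s (𝟙_ C) Y ≫ T.map (x ⊗ₘ 𝟙 Y) := by
          rw [nat₁ x Y]
      _ = ξ ≫ (λ_ (T.obj Y)).inv ≫ s (𝟙_ C) Y ≫ T.map (x ⊗ₘ 𝟙 Y) := by
          simp [id_tensorHom, ← leftUnitor_inv_naturality]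
      _ = ξ ≫ T.map ((λ_ Y).inv ≫ (x ⊗ₘ 𝟙 Y)) := by
          rw [hs]; simp
  have formσ := key σ (fun {X X'} f Y => σnat₁ f Y) σunit
  have formτ := key τ (fun {X X'} f Y => τnat₁ f Y) τunit
  refine ⟨fun X Y => sep _ _ fun e => ?_, formσ⟩
  obtain ⟨x, ξ, rfl⟩ := decomp e
  rw [Category.assoc, Category.assoc, formσ, formτ]
end

section
/- Let X and Y be measurable spaces such that the underlying set of X is infinite. Then the family Ω_{X,Y} is a σ-algebra on Hom(X,Y): it contains the empty set, is closed under complementation, and is closed under countable unions. -/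
open MeasureTheory

/-- For `X` with infinite underlying set, `Ω_{X,Y}` is a σ-algebra on
`Hom(X,Y)`: it contains `∅` and is closed under complements and countable
unions. -/
theorem Omega_isSigmaAlgebra (X Y : Type*) [MeasurableSpace X] [MeasurableSpace Y]
    [Infinite X] :
    (∅ : Set {f : X → Y // Measurable f}) ∈ Omega X Y ∧
    (∀ S : Set {f : X → Y // Measurable f}, S ∈ Omega X Y → Sᶜ ∈ Omega X Y) ∧
    (∀ S : ℕ → Set {f : X → Y // Measurable f},
      (∀ m, S m ∈ Omega X Y) → (⋃ m, S m) ∈ Omega X Y) := by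
  refine ⟨?_, ?_, ?_⟩
  · exact ⟨Infinite.natEmbedding X, (Infinite.natEmbedding X).injective, ∅, by
      ext f; simp⟩
  · rintro S ⟨h, hinj, V, rfl⟩
    exact ⟨h, hinj, Vᶜ, by ext f; simp⟩
  · intro S hS
    choose h hinj V hV using hS
    set s : Set X := ⋃ m, Set.range (h m) with hs
    haveI : Countable ↥s := by
      rw [hs]; exact (Set.countable_iUnion fun m => Set.countable_range (h m)).to_subtype
    haveI : Infinite ↥s := by
      exact Set.infinite_coe_iff.2 ((Set.infinite_range_of_injective (hinj 0)).mono
        (Set.subset_iUnion (fun m => Set.range (h m)) 0))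
    obtain ⟨e⟩ : Nonempty (ℕ ≃ ↥s) := nonempty_equiv_of_countable
    have hmem : ∀ m n, h m n ∈ s := fun m n =>
      Set.mem_iUnion.2 ⟨m, Set.mem_range_self n⟩
    set φ : ℕ → ℕ → ℕ := fun m n => e.symm ⟨h m n, hmem m n⟩ with hφ
    have hHφ : ∀ m n, ((e (φ m n) : ↥s) : X) = h m n := by
      intro m n; rw [hφ]; simp
    refine ⟨fun k => (e k : X), ?_, {g | ∃ m, (fun n => g (φ m n)) ∈ V m}, ?_⟩
    · exact Subtype.val_injective.comp e.injective
    · ext f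
      simp only [Set.mem_iUnion, Set.mem_setOf_eq]
      constructor
      · rintro ⟨m, hm⟩
        refine ⟨m, ?_⟩
        have := hV m
        rw [this] at hm
        simpa only [hHφ, Set.mem_setOf_eq] using hm
      · rintro ⟨m, hm⟩
        refine ⟨m, ?_⟩
        rw [hV m]
        simpa only [hHφ, Set.mem_setOf_eq] using hm
end

section
/- Let X and Y be measurable spaces such that the underlying set of X is infinite. Then every set in the σ-algebra Σ_{X⊸Y} belongs to the family Ω_{X,Y}; that is, Σ_{X⊸Y} ⊆ Ω_{X,Y}. -/
open MeasureTheory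

lemma exists_inj_cover {X : Type*} [Infinite X] (s : Set X) (hs : s.Countable) :
    ∃ h : ℕ → X, Function.Injective h ∧ s ⊆ Set.range h := by
  classical
  set t : Set X := s ∪ Set.range (Infinite.natEmbedding X) with ht
  have hct : t.Countable := hs.union (Set.countable_range _)
  have hit : t.Infinite :=
    (Set.infinite_range_of_injective (Infinite.natEmbedding X).injective).mono
      Set.subset_union_right
  haveI : Countable t := hct.to_subtype
  haveI : Infinite t := hit.to_subtype
  obtain ⟨e⟩ := nonempty_equiv_of_countable (α := ℕ) (β := t)
  refine ⟨fun n => (e n : X), fun a b hab => e.injective (Subtype.ext hab), ?_⟩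
  intro x hx
  exact ⟨e.symm ⟨x, Or.inl hx⟩, by simp⟩

theorem mem_omega {X Y : Type*} [MeasurableSpace X] [MeasurableSpace Y] [Infinite X]
    (K : Set {f : X → Y // Measurable f})
    (hK : MeasurableSet[MeasurableSpace.generateFrom
        {S | ∃ (x : X) (U : Set Y), MeasurableSet U ∧ S = {f : {f : X → Y // Measurable f} | f.1 x ∈ U}}] K) :
    ∃ h : ℕ → X, Function.Injective h ∧
      ∃ V : Set (ℕ → Y), K = {f | (fun n => f.1 (h n)) ∈ V} := by
  classical
  induction hK with
  | basic S hS =>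
      obtain ⟨x, U, -, rfl⟩ := hS
      obtain ⟨h, hinj, hsub⟩ := exists_inj_cover ({x} : Set X) (Set.countable_singleton x)
      obtain ⟨k, hk⟩ := hsub rfl
      exact ⟨h, hinj, {g | g k ∈ U}, by ext f; simp [hk]⟩
  | empty =>
      obtain ⟨h, hinj, -⟩ := exists_inj_cover (∅ : Set X) Set.countable_empty
      exact ⟨h, hinj, ∅, by simp⟩
  | compl A _ ih =>
      obtain ⟨h, hinj, V, rfl⟩ := ih
      exact ⟨h, hinj, Vᶜ, rfl⟩
  | iUnion A _ ih =>
      choose h hinj V hV using ih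
      obtain ⟨g, ginj, gsub⟩ := exists_inj_cover (⋃ n, Set.range (h n))
        (Set.countable_iUnion fun n => Set.countable_range _)
      have key : ∀ n k, ∃ m, g m = h n k := fun n k =>
        gsub (Set.mem_iUnion.2 ⟨n, Set.mem_range_self k⟩)
      choose φ hφ using key
      refine ⟨g, ginj, ⋃ n, (fun (p : ℕ → Y) => fun k => p (φ n k)) ⁻¹' V n, ?_⟩
      ext f
      simp only [Set.mem_iUnion, hV, Set.mem_setOf_eq, Set.mem_preimage]
      refine exists_congr fun n => ?_
      have : (fun k => f.1 (g (φ n k))) = fun k => f.1 (h n k) := by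
        funext k; rw [hφ]
      rw [this]

/-- For `X` with infinite underlying set, every `Σ_{X⊸Y}`-measurable set
belongs to `Ω_{X,Y}`. -/
theorem homSigma_subset_Omega (X Y : Type*) [MeasurableSpace X] [MeasurableSpace Y]
    [Infinite X] :
    ∀ K : Set {f : X → Y // Measurable f},
      MeasurableSet[homSigma X Y] K → K ∈ Omega X Y := by
  intro K hK
  exact mem_omega K hK
end

section
/- Let X and Y be measurable spaces and let K be any set in the σ-algebra Σ_{X⊸Y}. Then there exists a countable set D ⊆ X such that membership in K depends only on the values on D: for all f, g ∈ Hom(X,Y), if f(x) = g(x) for every x ∈ D, then f ∈ K if and only if g ∈ K. -/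
open MeasureTheory

/-- Membership in any `Σ_{X⊸Y}`-measurable set `K` depends only on the values
of a function on some countable set `D ⊆ X`. -/
theorem homSigma_countably_determined (X Y : Type*) [MeasurableSpace X]
    [MeasurableSpace Y] (K : Set {f : X → Y // Measurable f})
    (hK : MeasurableSet[homSigma X Y] K) :
    ∃ D : Set X, D.Countable ∧
      ∀ f g : {f : X → Y // Measurable f},
        (∀ x ∈ D, f.1 x = g.1 x) → (f ∈ K ↔ g ∈ K) := by
  induction K, hK using MeasurableSpace.generateFrom_induction with
  | hC t ht _ =>
    obtain ⟨x, U, hU, rfl⟩ := ht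
    exact ⟨{x}, Set.countable_singleton x,
      fun f g h => by simp [h x (Set.mem_singleton x)]⟩
  | empty => exact ⟨∅, Set.countable_empty, fun f g _ => Iff.rfl⟩
  | compl t ht iht =>
    obtain ⟨D, hD, h⟩ := iht
    exact ⟨D, hD, fun f g hfg => not_congr (h f g hfg)⟩
  | iUnion s hs ihs =>
    choose D hD h using ihs
    refine ⟨⋃ n, D n, Set.countable_iUnion hD, fun f g hfg => ?_⟩
    simp only [Set.mem_iUnion]
    exact exists_congr fun n => h n f g fun x hx => hfg x (Set.mem_iUnion.2 ⟨n, hx⟩)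
end

section
/- Let X = Y = ℝ with the Borel σ-algebra, and let μ be a probability measure on ℝ that is absolutely continuous with respect to the Borel (Lebesgue) measure m (i.e., m(A) = 0 implies μ(A) = 0 for all Borel A). Then the set K = {f ∈ Hom(ℝ,ℝ) | μ(f⁻¹({0})) = 1} does not belong to the σ-algebra Σ_{ℝ⊸ℝ}. -/
open MeasureTheory

/-- For a probability measure `μ` on `ℝ` absolutely continuous w.r.t. Lebesgue
measure, the set `K = {f ∈ Hom(ℝ,ℝ) | μ(f⁻¹{0}) = 1}` is not
`Σ_{ℝ⊸ℝ}`-measurable. -/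
theorem counterexample_not_measurableSet (μ : Measure ℝ) [IsProbabilityMeasure μ]
    (hac : μ ≪ (volume : Measure ℝ)) :
    ¬ MeasurableSet[homSigma ℝ ℝ]
        {f : {f : ℝ → ℝ // Measurable f} | μ (f.1 ⁻¹' {0}) = 1} := by
  intro hK
  -- Every homSigma-measurable set depends only on countably many coordinates.
  have key : ∀ S : Set {f : ℝ → ℝ // Measurable f}, MeasurableSet[homSigma ℝ ℝ] S →
      ∃ D : Set ℝ, D.Countable ∧
        ∀ f g : {f : ℝ → ℝ // Measurable f}, (∀ x ∈ D, f.1 x = g.1 x) → (f ∈ S ↔ g ∈ S) := by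
    intro S hS
    refine MeasurableSpace.generateFrom_induction _
      (fun S _ => ∃ D : Set ℝ, D.Countable ∧
        ∀ f g : {f : ℝ → ℝ // Measurable f}, (∀ x ∈ D, f.1 x = g.1 x) → (f ∈ S ↔ g ∈ S))
      ?_ ?_ ?_ ?_ S hS
    · rintro t ⟨x, U, hU, rfl⟩ _
      exact ⟨{x}, Set.countable_singleton x, fun f g hfg => by
        simp [hfg x (Set.mem_singleton x)]⟩
    · exact ⟨∅, Set.countable_empty, fun f g _ => Iff.rfl⟩
    · rintro t _ ⟨D, hD, h⟩
      exact ⟨D, hD, fun f g hfg => not_congr (h f g hfg)⟩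
    · rintro s _ hs
      choose D hDc hD using hs
      refine ⟨⋃ n, D n, Set.countable_iUnion hDc, fun f g hfg => ?_⟩
      simp only [Set.mem_iUnion]
      exact exists_congr fun n => hD n f g fun x hx => hfg x (Set.mem_iUnion.2 ⟨n, hx⟩)
  obtain ⟨D, hDc, hD⟩ := key _ hK
  have hDm : MeasurableSet D := hDc.measurableSet
  -- f₀ ≡ 0, g = indicator of Dᶜ
  set f₀ : {f : ℝ → ℝ // Measurable f} := ⟨fun _ => 0, measurable_const⟩ with hf₀
  set g : {f : ℝ → ℝ // Measurable f} :=
    ⟨Dᶜ.indicator (fun _ => (1:ℝ)), measurable_const.indicator hDm.compl⟩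
  have hagree : ∀ x ∈ D, f₀.1 x = g.1 x := fun x hx => by simp [f₀, g, Set.indicator_apply, hx]
  have hf₀K : μ (f₀.1 ⁻¹' {0}) = 1 := by
    have : f₀.1 ⁻¹' ({0} : Set ℝ) = Set.univ := by ext x; simp [f₀]
    rw [this]; exact measure_univ
  have hgpre : g.1 ⁻¹' ({0} : Set ℝ) = D := by
    ext x
    by_cases hx : x ∈ D <;> simp [g, Set.indicator_apply, hx]
  have hgK : μ (g.1 ⁻¹' {0}) = 0 := by
    rw [hgpre]; exact hac (hDc.measure_zero volume)
  have := (hD f₀ g hagree).1 hf₀K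
  rw [Set.mem_setOf_eq, hgK] at this
  exact zero_ne_one this
end

section
/- Let μ be a probability measure on ℝ (with the Borel σ-algebra) that is absolutely continuous with respect to Lebesgue measure. Then the pushforward map G : Hom(ℝ,ℝ) → 𝒢(ℝ), f ↦ μ(f⁻¹(−)) (i.e., f ↦ the pushforward measure f_*μ), is not measurable from (Hom(ℝ,ℝ), Σ_{ℝ⊸ℝ}) to the space 𝒢(ℝ) of probability measures on ℝ equipped with the σ-algebra generated by the evaluation maps ν ↦ ν(A) for Borel sets A ⊆ ℝ. -/
open MeasureTheory

open MeasureTheory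

def girySigma (α : Type*) [MeasurableSpace α] :
    MeasurableSpace {ν : Measure α // IsProbabilityMeasure ν} :=
  ⨆ (A : Set α) (_ : MeasurableSet A),
    MeasurableSpace.comap (fun ν : {ν : Measure α // IsProbabilityMeasure ν} => ν.1 A)
      inferInstance

/-- Every `homSigma`-measurable set is determined by the values of `f` on a
countable set of points. -/
lemma homSigma_countable_determined {X Y : Type*} [MeasurableSpace X] [MeasurableSpace Y]
    {S : Set {f : X → Y // Measurable f}} (hS : MeasurableSet[homSigma X Y] S) :
    ∃ D : Set X, D.Countable ∧ ∀ f g : {f : X → Y // Measurable f},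
      (∀ x ∈ D, f.1 x = g.1 x) → (f ∈ S ↔ g ∈ S) := by
  refine MeasurableSpace.generateFrom_induction _
    (p := fun s _ => ∃ D : Set X, D.Countable ∧ ∀ f g : {f : X → Y // Measurable f},
      (∀ x ∈ D, f.1 x = g.1 x) → (f ∈ s ↔ g ∈ s)) ?hC ?empty ?compl ?iUnion S hS
  case hC =>
    rintro t ht -
    obtain ⟨x, U, -, rfl⟩ := ht
    exact ⟨{x}, Set.countable_singleton x, fun f g hfg => by
      simp only [Set.mem_setOf_eq, hfg x (Set.mem_singleton x)]⟩
  case empty => exact ⟨∅, Set.countable_empty, fun f g _ => Iff.rfl⟩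
  case compl =>
    rintro t ht ⟨D, hD, hdet⟩
    exact ⟨D, hD, fun f g hfg => by simp [hdet f g hfg]⟩
  case iUnion =>
    rintro s hs ih
    choose D hD hdet using ih
    refine ⟨⋃ n, D n, Set.countable_iUnion hD, fun f g hfg => ?_⟩
    simp only [Set.mem_iUnion]
    exact exists_congr fun n => hdet n f g fun x hx => hfg x (Set.mem_iUnion.2 ⟨n, hx⟩)

/-- For a probability measure `μ` on `ℝ` absolutely continuous w.r.t. Lebesgue
measure, the pushforward map `f ↦ f_*μ` is not measurable from
`(Hom(ℝ,ℝ), Σ_{ℝ⊸ℝ})` to the Giry space `𝒢(ℝ)`. -/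
theorem pushforward_not_measurable (μ : Measure ℝ) [IsProbabilityMeasure μ]
    (hac : μ ≪ (volume : Measure ℝ)) :
    ¬ @Measurable _ _ (homSigma ℝ ℝ) (girySigma ℝ)
        (fun f : {f : ℝ → ℝ // Measurable f} =>
          (⟨μ.map f.1, Measure.isProbabilityMeasure_map f.2.aemeasurable⟩ :
            {ν : Measure ℝ // IsProbabilityMeasure ν})) := by
  intro hmeas
  -- evaluation at {0} is girySigma-measurable
  have hev : @Measurable _ _ (girySigma ℝ) _
      (fun ν : {ν : Measure ℝ // IsProbabilityMeasure ν} => ν.1 ({0} : Set ℝ)) := by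
    rw [measurable_iff_comap_le]
    exact le_iSup₂ (f := fun (A : Set ℝ) (_ : MeasurableSet A) =>
      MeasurableSpace.comap (fun ν : {ν : Measure ℝ // IsProbabilityMeasure ν} => ν.1 A)
        inferInstance) ({0} : Set ℝ) (measurableSet_singleton 0)
  have hSmeas : MeasurableSet[homSigma ℝ ℝ]
      {f : {f : ℝ → ℝ // Measurable f} | μ.map f.1 ({0} : Set ℝ) = 1} := by
    have : MeasurableSet[girySigma ℝ]
        {ν : {ν : Measure ℝ // IsProbabilityMeasure ν} | ν.1 ({0} : Set ℝ) = 1} :=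
      hev (measurableSet_singleton 1)
    exact hmeas this
  obtain ⟨D, hD, hdet⟩ := homSigma_countable_determined hSmeas
  -- the constant-zero function is in S
  set f₀ : {f : ℝ → ℝ // Measurable f} := ⟨fun _ => 0, measurable_const⟩
  have hDmeas : MeasurableSet D := hD.measurableSet
  classical
  set g : {f : ℝ → ℝ // Measurable f} :=
    ⟨fun x => if x ∈ D then 0 else 1, Measurable.ite hDmeas measurable_const measurable_const⟩
  have hf₀ : μ.map f₀.1 ({0} : Set ℝ) = 1 := by
    rw [Measure.map_apply f₀.2 (measurableSet_singleton 0)]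
    simp [f₀]
  have hagree : ∀ x ∈ D, f₀.1 x = g.1 x := fun x hx => by simp [f₀, g, hx]
  have hg : μ.map g.1 ({0} : Set ℝ) = 1 := (hdet f₀ g hagree).mp hf₀
  have hpre : g.1 ⁻¹' ({0} : Set ℝ) = D := by
    ext x; by_cases hx : x ∈ D <;> simp [g, hx]
  have hμD : μ D = 0 := hac (hD.measure_zero volume)
  rw [Measure.map_apply g.2 (measurableSet_singleton 0), hpre, hμD] at hg
  exact zero_ne_one hg
end
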